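/- Let Φ : Matrix (Fin n) (Fin n) ℂ →ₗ[ℂ] Matrix (Fin m) (Fin m) ℂ be a linear map. The following are equivalent: (i) Φ is n-positive, i.e. the extension id_n ⊗ Φ maps positive semidefinite matrices indexed by (Fin n) × (Fin n) to positive semidefinite matrices; (ii) the Choi matrix C_Φ = Σ_{i,j} E_{ij} ⊗ₖ Φ(E_{ij}) is positive semidefinite; (iii) Φ is completely positive, i.e. for every k ≥ 1 the extension id_k ⊗ Φ maps positive semidefinite matrices to positive semidefinite matrices. -/

import Mathlib

open scoped Kronecker ComplexOrder Matrix

noncomputable section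

/-- The block of `M` at position `(a, b)` when `M` is viewed as a block matrix indexed by
`Fin k × Fin n`. -/
def blockAt {k n : ℕ} (M : Matrix (Fin k × Fin n) (Fin k × Fin n) ℂ) (a b : Fin k) :
    Matrix (Fin n) (Fin n) ℂ :=
  Matrix.of fun i j => M (a, i) (b, j)

/-- The extension `id_k ⊗ Φ` of a linear map `Φ` acting blockwise on block matrices. -/
def matExtend {n m : ℕ} (k : ℕ) (Φ : Matrix (Fin n) (Fin n) ℂ →ₗ[ℂ] Matrix (Fin m) (Fin m) ℂ)
    (M : Matrix (Fin k × Fin n) (Fin k × Fin n) ℂ) :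
    Matrix (Fin k × Fin m) (Fin k × Fin m) ℂ :=
  ∑ a : Fin k, ∑ b : Fin k,
    (Matrix.single a b (1 : ℂ)) ⊗ₖ Φ (blockAt M a b)

/-- The Choi matrix of a linear map `Φ`, i.e. `∑ i j, E i j ⊗ₖ Φ (E i j)`. -/
def choiMatrix {n m : ℕ} (Φ : Matrix (Fin n) (Fin n) ℂ →ₗ[ℂ] Matrix (Fin m) (Fin m) ℂ) :
    Matrix (Fin n × Fin m) (Fin n × Fin m) ℂ :=
  ∑ i : Fin n, ∑ j : Fin n,
    (Matrix.single i j (1 : ℂ)) ⊗ₖ Φ (Matrix.single i j (1 : ℂ))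

lemma matExtend_apply {n m k : ℕ} (Φ : Matrix (Fin n) (Fin n) ℂ →ₗ[ℂ] Matrix (Fin m) (Fin m) ℂ)
    (M : Matrix (Fin k × Fin n) (Fin k × Fin n) ℂ) (a b : Fin k) (p q : Fin m) :
    matExtend k Φ M (a, p) (b, q) = Φ (blockAt M a b) p q := by
  simp [matExtend, Matrix.sum_apply, Matrix.kroneckerMap_apply, Matrix.single,
    Finset.sum_ite_eq, Finset.sum_ite_eq', ite_and, ite_mul]

lemma choiMatrix_apply {n m : ℕ} (Φ : Matrix (Fin n) (Fin n) ℂ →ₗ[ℂ] Matrix (Fin m) (Fin m) ℂ)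
    (i j : Fin n) (p q : Fin m) :
    choiMatrix Φ (i, p) (j, q) = Φ (Matrix.single i j 1) p q := by
  simp [choiMatrix, Matrix.sum_apply, Matrix.kroneckerMap_apply, Matrix.single,
    Finset.sum_ite_eq, Finset.sum_ite_eq', ite_and, ite_mul]

lemma map_apply_eq {n m : ℕ} (Φ : Matrix (Fin n) (Fin n) ℂ →ₗ[ℂ] Matrix (Fin m) (Fin m) ℂ)
    (X : Matrix (Fin n) (Fin n) ℂ) (p q : Fin m) :
    Φ X p q = ∑ i : Fin n, ∑ j : Fin n, X i j * Φ (Matrix.single i j 1) p q := by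
  conv_lhs => rw [Matrix.matrix_eq_sum_single X]
  rw [map_sum]
  simp only [map_sum, Matrix.sum_apply]
  refine Finset.sum_congr rfl fun i _ => Finset.sum_congr rfl fun j _ => ?_
  rw [show Matrix.single i j (X i j) = X i j • Matrix.single i j 1 by
    rw [Matrix.smul_single, smul_eq_mul, mul_one]]
  rw [map_smul, Matrix.smul_apply, smul_eq_mul]

lemma matExtend_entry {n m k : ℕ} (Φ : Matrix (Fin n) (Fin n) ℂ →ₗ[ℂ] Matrix (Fin m) (Fin m) ℂ)
    (M : Matrix (Fin k × Fin n) (Fin k × Fin n) ℂ) (a b : Fin k) (p q : Fin m) :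
    matExtend k Φ M (a, p) (b, q) =
      ∑ i : Fin n, ∑ j : Fin n, M (a, i) (b, j) * choiMatrix Φ (i, p) (j, q) := by
  rw [matExtend_apply, map_apply_eq]
  simp [choiMatrix_apply, blockAt]

lemma sum4_comm {α β γ δ : Type*} [Fintype α] [Fintype β] [Fintype γ] [Fintype δ]
    {f : α → β → γ → δ → ℂ} :
    ∑ a : α, ∑ b : β, ∑ c : γ, ∑ d : δ, f a b c d =
      ∑ c : γ, ∑ d : δ, ∑ a : α, ∑ b : β, f a b c d := by
  have h1 : ∀ a : α, ∑ b : β, ∑ c : γ, ∑ d : δ, f a b c d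
      = ∑ c : γ, ∑ b : β, ∑ d : δ, f a b c d := fun a => Finset.sum_comm
  simp_rw [h1]
  rw [Finset.sum_comm]
  refine Finset.sum_congr rfl fun c _ => ?_
  have h2 : ∀ a : α, ∑ b : β, ∑ d : δ, f a b c d
      = ∑ d : δ, ∑ b : β, f a b c d := fun a => Finset.sum_comm
  simp_rw [h2]
  exact Finset.sum_comm

lemma key {n m k : ℕ} (Φ : Matrix (Fin n) (Fin n) ℂ →ₗ[ℂ] Matrix (Fin m) (Fin m) ℂ)
    (A : Matrix (Fin k × Fin n) (Fin k × Fin n) ℂ)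
    (B : Matrix (Fin n × Fin m) (Fin n × Fin m) ℂ)
    (hC : choiMatrix Φ = Bᴴ * B) :
    matExtend k Φ (Aᴴ * A) =
      (Matrix.of fun (st : (Fin k × Fin n) × (Fin n × Fin m)) (bq : Fin k × Fin m) =>
        ∑ j : Fin n, A st.1 (bq.1, j) * B st.2 (j, bq.2))ᴴ *
      (Matrix.of fun (st : (Fin k × Fin n) × (Fin n × Fin m)) (bq : Fin k × Fin m) =>
        ∑ j : Fin n, A st.1 (bq.1, j) * B st.2 (j, bq.2)) := by
  ext ⟨a, p⟩ ⟨b, q⟩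
  rw [matExtend_entry, Matrix.mul_apply, Fintype.sum_prod_type]
  simp only [Matrix.conjTranspose_apply, Matrix.of_apply, star_sum, star_mul', hC,
    Matrix.mul_apply, Finset.sum_mul_sum]
  rw [sum4_comm]
  refine Finset.sum_congr rfl fun s _ => Finset.sum_congr rfl fun t _ =>
    Finset.sum_congr rfl fun i _ => Finset.sum_congr rfl fun j _ => ?_
  ring

lemma cp_of_choi {n m : ℕ} (Φ : Matrix (Fin n) (Fin n) ℂ →ₗ[ℂ] Matrix (Fin m) (Fin m) ℂ)
    (hC : (choiMatrix Φ).PosSemidef) (k : ℕ) (M : Matrix (Fin k × Fin n) (Fin k × Fin n) ℂ)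
    (hM : M.PosSemidef) : (matExtend k Φ M).PosSemidef := by
  obtain ⟨B, hB⟩ : ∃ B, choiMatrix Φ = Bᴴ * B := by
    open scoped MatrixOrder Matrix.Norms.L2Operator in
    exact CStarAlgebra.nonneg_iff_eq_star_mul_self.mp hC.nonneg
  obtain ⟨A, hA⟩ : ∃ A, M = Aᴴ * A := by
    open scoped MatrixOrder Matrix.Norms.L2Operator in
    exact CStarAlgebra.nonneg_iff_eq_star_mul_self.mp hM.nonneg
  rw [hA, key Φ A B hB]
  exact Matrix.posSemidef_conjTranspose_mul_self _

def omegaVec (n : ℕ) : Matrix (Fin 1) (Fin n × Fin n) ℂ :=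
  Matrix.of fun _ ip => if ip.1 = ip.2 then 1 else 0

lemma omega_psd (n : ℕ) : ((omegaVec n)ᴴ * omegaVec n).PosSemidef :=
  Matrix.posSemidef_conjTranspose_mul_self _

lemma blockAt_omega {n : ℕ} (a b : Fin n) :
    blockAt ((omegaVec n)ᴴ * omegaVec n) a b = Matrix.single a b 1 := by
  ext i j
  simp [blockAt, omegaVec, Matrix.mul_apply, Matrix.conjTranspose_apply,
    Matrix.single, apply_ite, eq_comm, and_comm]
  aesop

lemma matExtend_omega {n m : ℕ} (Φ : Matrix (Fin n) (Fin n) ℂ →ₗ[ℂ] Matrix (Fin m) (Fin m) ℂ) :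
    matExtend n Φ ((omegaVec n)ᴴ * omegaVec n) = choiMatrix Φ := by
  ext ⟨i, p⟩ ⟨j, q⟩
  rw [matExtend_apply, blockAt_omega, choiMatrix_apply]

/-- **Choi's theorem.** For a linear map `Φ` from `n × n` to `m × m` complex matrices, the
following are equivalent: `Φ` is `n`-positive; the Choi matrix of `Φ` is positive semidefinite;
`Φ` is completely positive. -/
theorem choi_theorem {n m : ℕ}
    (Φ : Matrix (Fin n) (Fin n) ℂ →ₗ[ℂ] Matrix (Fin m) (Fin m) ℂ) :
    ((∀ M : Matrix (Fin n × Fin n) (Fin n × Fin n) ℂ, M.PosSemidef →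
        (matExtend n Φ M).PosSemidef) ↔
      (choiMatrix Φ).PosSemidef) ∧
    ((choiMatrix Φ).PosSemidef ↔
      ∀ k : ℕ, 1 ≤ k → ∀ M : Matrix (Fin k × Fin n) (Fin k × Fin n) ℂ,
        M.PosSemidef → (matExtend k Φ M).PosSemidef) := by
  constructor
  · constructor
    · intro h
      have := h _ (omega_psd n)
      rwa [matExtend_omega] at this
    · intro hC M hM
      exact cp_of_choi Φ hC n M hM
  · constructor
    · intro hC k _ M hM
      exact cp_of_choi Φ hC k M hM
    · intro h
      rcases Nat.eq_zero_or_pos n with hn | hn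
      · subst hn
        have : choiMatrix Φ = 0 := by simp [choiMatrix]
        rw [this]
        exact Matrix.PosSemidef.zero
      · have := h n hn _ (omega_psd n)
        rwa [matExtend_omega] at this
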